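/- The Roman bondage number of the cycle C_5 on five vertices equals 3. -/

import Mathlib

open SimpleGraph

/-- The Roman domination number: the minimum weight of a Roman dominating function,
i.e. a function `f : V → ℕ` with values in `{0,1,2}` such that every vertex with
value `0` has a neighbor with value `2`. -/
noncomputable def romanDominationNumber {V : Type*} [Fintype V] (G : SimpleGraph V) : ℕ :=
  sInf {w | ∃ f : V → ℕ, (∀ v, f v ≤ 2) ∧
    (∀ v, f v = 0 → ∃ u, G.Adj v u ∧ f u = 2) ∧ w = ∑ v, f v}

/-- The Roman bondage number: the minimum cardinality of a set `B` of edges of `G`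
whose removal increases the Roman domination number. -/
noncomputable def romanBondageNumber {V : Type*} [Fintype V] (G : SimpleGraph V) : ℕ :=
  sInf {k | ∃ B : Finset (Sym2 V), ↑B ⊆ G.edgeSet ∧ B.card = k ∧
    romanDominationNumber G < romanDominationNumber (G.deleteEdges ↑B)}

set_option maxRecDepth 40000

lemma rdn_le {V : Type*} [Fintype V] (G : SimpleGraph V) (g : V → Fin 3)
    (h : ∀ v, g v = 0 → ∃ u, G.Adj v u ∧ g u = 2) :
    romanDominationNumber G ≤ ∑ v, (g v : ℕ) := by
  apply Nat.sInf_le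
  refine ⟨fun v => (g v : ℕ), fun v => ?_, fun v hv => ?_, rfl⟩
  · simpa using Nat.lt_succ_iff.mp (g v).is_lt
  · obtain ⟨u, hu, h2⟩ := h v (by simpa using Fin.ext (by simpa using hv))
    exact ⟨u, hu, by simp [h2]⟩

lemma rdn_ge {V : Type*} [Fintype V] (G : SimpleGraph V) (n : ℕ)
    (h : ∀ g : V → Fin 3, (∀ v, g v = 0 → ∃ u, G.Adj v u ∧ g u = 2) → n ≤ ∑ v, (g v : ℕ)) :
    n ≤ romanDominationNumber G := by
  apply le_csInf
  · exact ⟨∑ v : V, (2 : ℕ), fun _ => 2, fun _ => le_rfl, fun v hv => by simp at hv, rfl⟩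
  rintro w ⟨f, h1, h2, rfl⟩
  set g : V → Fin 3 := fun v => ⟨f v, by have := h1 v; omega⟩ with hg
  have hval : ∀ v, (g v : ℕ) = f v := fun v => rfl
  have := h g (fun v hv => by
    obtain ⟨u, hu, h2u⟩ := h2 v (by rw [← hval]; exact congrArg Fin.val hv)
    exact ⟨u, hu, Fin.ext (by simp [hval, h2u])⟩)
  calc n ≤ ∑ v, (g v : ℕ) := this
    _ = ∑ v, f v := by simp [hval]

lemma rdn_C5 : romanDominationNumber (cycleGraph 5) = 4 := by
  apply le_antisymm
  · have := rdn_le (cycleGraph 5) ![2,0,0,2,0] (by decide)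
    simpa using this.trans (by decide)
  · exact rdn_ge _ 4 (by decide)

/-- witness RDF of weight 4 avoiding edges s(i,i+1), s(j,j+1) -/
def wg (i j : Fin 5) : Fin 5 → Fin 3 :=
  if j - i = 1 then fun v => if v - i = 3 then 2 else if v - i = 1 ∨ v - i = 0 then 1 else 0
  else if j - i = 2 then fun v => if v - i = 2 ∨ v - i = 4 then 2 else 0
  else fun v => if v - i = 2 then 2 else if v - i = 4 ∨ v - i = 0 then 1 else 0

lemma wg_ok : ∀ i j : Fin 5,
    (∀ v, wg i j v = 0 → ∃ u, (cycleGraph 5).Adj v u ∧ s(v,u) ≠ s(i,i+1) ∧ s(v,u) ≠ s(j,j+1) ∧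
      wg i j u = 2) ∧ (∑ v, (wg i j v : ℕ)) = 4 := by decide

lemma edge_form : ∀ e : Sym2 (Fin 5), e ∈ (cycleGraph 5).edgeSet → ∃ i : Fin 5, e = s(i, i+1) := by
  intro e
  induction e using Sym2.ind with
  | _ a b =>
    rw [mem_edgeSet]
    revert a b; decide

lemma lb3 : ∀ g : Fin 5 → Fin 3,
    (∀ v, g v = 0 → ∃ u, (cycleGraph 5).Adj v u ∧ s(v,u) ≠ s(0,1) ∧ s(v,u) ≠ s(2,3) ∧
      s(v,u) ≠ s(4,0) ∧ g u = 2) → 5 ≤ ∑ v, (g v : ℕ) := by decide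

/-- The Roman bondage number of the cycle `C₅` is `3`. -/
theorem roman_bondage_C5 :
    romanBondageNumber (SimpleGraph.cycleGraph 5) = 3 := by
  have mem3 : 3 ∈ {k | ∃ B : Finset (Sym2 (Fin 5)), ↑B ⊆ (cycleGraph 5).edgeSet ∧ B.card = k ∧
      romanDominationNumber (cycleGraph 5) <
      romanDominationNumber ((cycleGraph 5).deleteEdges ↑B)} := by
    refine ⟨{s(0,1), s(2,3), s(4,0)}, ?_, by decide, ?_⟩
    · intro e he
      simp only [Finset.coe_insert, Finset.coe_singleton, Set.mem_insert_iff,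
        Set.mem_singleton_iff] at he
      rcases he with rfl | rfl | rfl <;> (rw [mem_edgeSet]; decide)
    · rw [rdn_C5]
      have h5 : 5 ≤ romanDominationNumber ((cycleGraph 5).deleteEdges
          ↑({s(0,1), s(2,3), s(4,0)} : Finset (Sym2 (Fin 5)))) := by
        apply rdn_ge
        intro g hg
        apply lb3
        intro v hv
        obtain ⟨u, hadj, h2⟩ := hg v hv
        rw [deleteEdges_adj] at hadj
        obtain ⟨hadj, hmem⟩ := hadj
        simp only [Finset.coe_insert, Finset.coe_singleton, Set.mem_insert_iff,
          Set.mem_singleton_iff, not_or] at hmem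
        exact ⟨u, hadj, hmem.1, hmem.2.1, hmem.2.2, h2⟩
      omega
  apply le_antisymm
  · exact Nat.sInf_le mem3
  · apply le_csInf ⟨3, mem3⟩
    rintro k ⟨B, hsub, hcard, hlt⟩
    by_contra hk
    push_neg at hk
    have hc : B.card ≤ 2 := by omega
    obtain ⟨i, j, hij⟩ : ∃ i j : Fin 5, ∀ e ∈ B, e = s(i,i+1) ∨ e = s(j,j+1) := by
      rcases B.eq_empty_or_nonempty with rfl | ⟨x, hx⟩
      · exact ⟨0, 0, by simp⟩
      · obtain ⟨i, hi⟩ := edge_form x (hsub hx)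
        have h1 : (B.erase x).card ≤ 1 := by
          have := Finset.card_erase_of_mem hx; omega
        rcases (B.erase x).eq_empty_or_nonempty with he | ⟨y, hy⟩
        · refine ⟨i, i, fun e heB => Or.inl ?_⟩
          have hex : e = x := by
            by_contra hne
            have : e ∈ B.erase x := Finset.mem_erase.mpr ⟨hne, heB⟩
            simp [he] at this
          rw [hex, hi]
        · obtain ⟨j, hj⟩ := edge_form y (hsub (Finset.mem_of_mem_erase hy))
          refine ⟨i, j, fun e heB => ?_⟩
          by_cases hex : e = x
          · exact Or.inl (by rw [hex, hi])
          · exact Or.inr (by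
              rw [Finset.card_le_one.mp h1 e (Finset.mem_erase.mpr ⟨hex, heB⟩) y hy, hj])
    have hle : romanDominationNumber ((cycleGraph 5).deleteEdges ↑B) ≤ 4 := by
      obtain ⟨hdom, hsum⟩ := wg_ok i j
      have h := rdn_le ((cycleGraph 5).deleteEdges ↑B) (wg i j) (fun v hv => by
        obtain ⟨u, hadj, hne1, hne2, h2⟩ := hdom v hv
        refine ⟨u, ?_, h2⟩
        rw [deleteEdges_adj]
        refine ⟨hadj, fun hmem => ?_⟩
        rcases hij _ (Finset.mem_coe.mp hmem) with h | h
        · exact hne1 h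
        · exact hne2 h)
      rw [hsum] at h
      exact h
    rw [rdn_C5] at hlt
    omega
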